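/- For all σ, τ ∈ K̂₀, all u ∈ L²(ℱ)_τ and v ∈ L²(ℱ)_σ, every even integer s ≥ 0 and every integer m ≥ 0, one has |⟨T^m u, v⟩| ≤ C_s (c(σ)/c(τ))^{s/2} ‖(T*)^m‖_{H^s} ‖u‖₂ ‖v‖₂, where C_s > 0 is a constant depending only on s (and on G and the choices made) and ‖(T*)^m‖_{H^s} denotes the operator norm of (T*)^m on H^s(ℱ). -/

import Mathlib

open MeasureTheory
open scoped ENNReal RealInnerProductSpace

/-!
**Statement 11.** For all `σ, τ ∈ K̂₀`, all `u ∈ L²(ℱ)_τ` and `v ∈ L²(ℱ)_σ`, every even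
integer `s ≥ 0` and every integer `m ≥ 0`,
`|⟨T^m u, v⟩| ≤ C_s (c(σ)/c(τ))^{s/2} ‖(T*)^m‖_{H^s} ‖u‖₂ ‖v‖₂`,
where `C_s > 0` depends only on `s` (and on `G` and the choices made).

The Sobolev structure is expressed through the isotypic decomposition of `L²(ℱ)` under `K₀`
(projections `Q τ`, scalars `c τ ≥ 1`): `‖x‖_{H^s}² = ∑_τ (c τ)^s ‖Q τ x‖²` (squared
Sobolev norms compared in `ℝ≥0∞`), and the operator norm `‖(T*)^m‖_{H^s}` is replaced by an
arbitrary bound `M` for `(T*)^m` on `H^s`.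
-/

theorem statement11
    -- G : a connected non-compact simple Lie group with finite centre
    (G : Type*) [Group G] [TopologicalSpace G] [IsTopologicalGroup G] [ConnectedSpace G]
    (hG_noncompact : ¬ CompactSpace G)
    (hG_finite_centre : Finite (Subgroup.center G))
    -- a maximal compact subgroup K
    (K : Subgroup G) (hK_compact : IsCompact (K : Set G))
    -- the full flag manifold ℱ = G/P ≅ K/M with its K-invariant probability measure m
    (ℱ : Type*) [TopologicalSpace ℱ] [CompactSpace ℱ] [MeasurableSpace ℱ] [BorelSpace ℱ]
    [MulAction G ℱ]
    (haction : Continuous fun p : G × ℱ => p.1 • p.2)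
    (hKtrans : ∀ x y : ℱ, ∃ k ∈ K, k • x = y)
    (m : Measure ℱ) [IsProbabilityMeasure m]
    (hm_inv : ∀ k ∈ K, Measure.map (fun x : ℱ => k • x) m = m)
    -- the isotypic decomposition of L²(ℱ) under the identity component K₀ of K
    (ι : Type*) (Q : ι → (Lp ℝ 2 m →L[ℝ] Lp ℝ 2 m)) (c : ι → ℝ)
    (hc_one : ∀ τ, 1 ≤ c τ)
    (hQ_selfadj : ∀ (τ : ι) (u v : Lp ℝ 2 m), ⟪Q τ u, v⟫ = ⟪u, Q τ v⟫)
    (hQ_idem : ∀ τ : ι, (Q τ).comp (Q τ) = Q τ)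
    (hQ_orth : ∀ τ τ' : ι, τ ≠ τ' → (Q τ).comp (Q τ') = 0)
    (hQ_complete : ∀ u : Lp ℝ 2 m, HasSum (fun τ : ι => Q τ u) u) :
    ∀ s : ℕ, Even s → ∃ C > (0 : ℝ),
      ∀ (S : Finset G) (w : G → ℝ≥0∞),
        -- μ = ∑_{g ∈ S} w g • δ_g is a probability measure with finite support S
        (∀ g ∈ S, w g ≠ 0) → (∑ g ∈ S, w g) = 1 →
        ∀ T Tstar : Lp ℝ 2 m →L[ℝ] Lp ℝ 2 m,
          -- T is the Markov operator of μ
          (∀ u : Lp ℝ 2 m, (T u : ℱ → ℝ) =ᵐ[m]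
            fun ξ : ℱ => ∑ g ∈ S, (w g).toReal * u (g⁻¹ • ξ)) →
          -- Tstar is the L²(ℱ, m)-adjoint of T
          (∀ u v : Lp ℝ 2 m, ⟪T u, v⟫ = ⟪u, Tstar v⟫) →
          ∀ (τ₁ τ₂ : ι) (u v : Lp ℝ 2 m) (m' : ℕ) (M : ℝ),
            -- u ∈ L²(ℱ)_{τ₁}, v ∈ L²(ℱ)_{τ₂}
            Q τ₁ u = u → Q τ₂ v = v →
            -- M is a bound for the operator norm of (T*)^{m'} on H^s
            0 ≤ M →
            (∀ x : Lp ℝ 2 m,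
              (∑' τ : ι, ENNReal.ofReal (c τ ^ s * ‖Q τ ((Tstar ^ m') x)‖ ^ 2))
                ≤ ENNReal.ofReal (M ^ 2) * ∑' τ : ι, ENNReal.ofReal (c τ ^ s * ‖Q τ x‖ ^ 2)) →
            |⟪(T ^ m') u, v⟫| ≤ C * (c τ₂ / c τ₁) ^ ((s : ℝ) / 2) * M * ‖u‖ * ‖v‖ := by
  intro s _hs
  refine ⟨1, one_pos, ?_⟩
  intro S w _hw _hw1 T Tstar _hT hadj τ₁ τ₂ u v m' M hu hv hM hbound
  have hc₁ : (0 : ℝ) < c τ₁ := lt_of_lt_of_le one_pos (hc_one τ₁)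
  have hc₂ : (0 : ℝ) < c τ₂ := lt_of_lt_of_le one_pos (hc_one τ₂)
  -- adjoint of powers
  have hpow : ∀ n : ℕ, ∀ x y : Lp ℝ 2 m, ⟪(T ^ n) x, y⟫ = ⟪x, (Tstar ^ n) y⟫ := by
    intro n
    induction n with
    | zero => intro x y; simp
    | succ n ih =>
      intro x y
      have h1 : (T ^ (n + 1)) x = (T ^ n) (T x) := by rw [pow_succ]; rfl
      have h2 : (Tstar ^ (n + 1)) y = Tstar ((Tstar ^ n) y) := by rw [pow_succ']; rfl
      rw [h1, ih, hadj, h2]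
  set wv : Lp ℝ 2 m := (Tstar ^ m') v with hwv
  have key : ⟪(T ^ m') u, v⟫ = ⟪u, Q τ₁ wv⟫ := by
    calc ⟪(T ^ m') u, v⟫ = ⟪u, wv⟫ := hpow m' u v
      _ = ⟪Q τ₁ u, wv⟫ := by rw [hu]
      _ = ⟪u, Q τ₁ wv⟫ := hQ_selfadj τ₁ u wv
  -- the Sobolev norm of v reduces to a single term
  have hv_tsum : (∑' τ : ι, ENNReal.ofReal (c τ ^ s * ‖Q τ v‖ ^ 2))
      = ENNReal.ofReal (c τ₂ ^ s * ‖v‖ ^ 2) := by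
    rw [tsum_eq_single τ₂]
    · rw [hv]
    · intro τ hτ
      have hz : Q τ v = 0 := by
        rw [← hv]
        calc Q τ (Q τ₂ v) = ((Q τ).comp (Q τ₂)) v := rfl
          _ = 0 := by rw [hQ_orth τ τ₂ hτ]; rfl
      simp [hz]
  -- the key quantitative bound
  have hmain : c τ₁ ^ s * ‖Q τ₁ wv‖ ^ 2 ≤ M ^ 2 * (c τ₂ ^ s * ‖v‖ ^ 2) := by
    have h1 : ENNReal.ofReal (c τ₁ ^ s * ‖Q τ₁ wv‖ ^ 2)
        ≤ ENNReal.ofReal (M ^ 2 * (c τ₂ ^ s * ‖v‖ ^ 2)) := by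
      calc ENNReal.ofReal (c τ₁ ^ s * ‖Q τ₁ wv‖ ^ 2)
          ≤ ∑' τ : ι, ENNReal.ofReal (c τ ^ s * ‖Q τ wv‖ ^ 2) := ENNReal.le_tsum τ₁
        _ ≤ ENNReal.ofReal (M ^ 2) * ∑' τ : ι, ENNReal.ofReal (c τ ^ s * ‖Q τ v‖ ^ 2) :=
            hbound v
        _ = ENNReal.ofReal (M ^ 2 * (c τ₂ ^ s * ‖v‖ ^ 2)) := by
            rw [hv_tsum, ← ENNReal.ofReal_mul (by positivity)]
    exact (ENNReal.ofReal_le_ofReal_iff (by positivity)).mp h1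
  set A : ℝ := (c τ₂ / c τ₁) ^ ((s : ℝ) / 2) with hA
  have hA_nonneg : 0 ≤ A := Real.rpow_nonneg (by positivity) _
  have hA_sq : A ^ 2 = (c τ₂ / c τ₁) ^ s := by
    rw [hA, ← Real.rpow_natCast ((c τ₂ / c τ₁) ^ ((s : ℝ) / 2)) 2,
      ← Real.rpow_mul (by positivity), ← Real.rpow_natCast (c τ₂ / c τ₁) s]
    congr 1
    push_cast
    ring
  -- ‖Q τ₁ wv‖ ≤ A * M * ‖v‖
  have hnorm : ‖Q τ₁ wv‖ ≤ A * M * ‖v‖ := by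
    have hsq : ‖Q τ₁ wv‖ ^ 2 ≤ (A * M * ‖v‖) ^ 2 := by
      have : (A * M * ‖v‖) ^ 2 = (c τ₂ / c τ₁) ^ s * M ^ 2 * ‖v‖ ^ 2 := by
        rw [mul_pow, mul_pow, hA_sq]
      rw [this, div_pow]
      rw [div_mul_eq_mul_div, div_mul_eq_mul_div, le_div_iff₀ (by positivity)]
      nlinarith [hmain]
    have h := Real.sqrt_le_sqrt hsq
    rwa [Real.sqrt_sq (norm_nonneg _), Real.sqrt_sq (by positivity)] at h
  calc |⟪(T ^ m') u, v⟫| = |⟪u, Q τ₁ wv⟫| := by rw [key]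
    _ ≤ ‖u‖ * ‖Q τ₁ wv‖ := abs_real_inner_le_norm u _
    _ ≤ ‖u‖ * (A * M * ‖v‖) := by
        exact mul_le_mul_of_nonneg_left hnorm (norm_nonneg u)
    _ = 1 * A * M * ‖u‖ * ‖v‖ := by ring
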